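/- Every virtually cyclic group satisfies Condition A: if G is a group containing a cyclic subgroup of finite index, then for every automorphism φ of G and every element g of G of infinite order, the relation φ(g^m) = g^n with m, n nonzero integers implies |m| = |n|. -/
import Mathlib


def ConditionA (N : Type*) [Group N] : Prop :=
  ∀ φ : N ≃* N, ∀ g : N, ¬ IsOfFinOrder g → ∀ k l : ℤ, k ≠ 0 → l ≠ 0 →
    φ (g ^ k) = g ^ l → |k| = |l|

/-- For `g` of infinite order, the index of `⟨g^k⟩` is `|k|` times the index of `⟨g⟩`. -/
lemma index_zpowers_zpow {G : Type*} [Group G] {g : G} (hg : ¬ IsOfFinOrder g) (k : ℤ) :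
    (Subgroup.zpowers (g ^ k)).index = k.natAbs * (Subgroup.zpowers g).index := by
  have hle : Subgroup.zpowers (g ^ k) ≤ Subgroup.zpowers g :=
    Subgroup.zpowers_le.2 (Subgroup.zpow_mem _ (Subgroup.mem_zpowers g) k)
  rw [← Subgroup.relIndex_mul_index hle]
  congr 1
  have hinj : Function.Injective fun n : ℤ => g ^ n :=
    injective_zpow_iff_not_isOfFinOrder.2 hg
  have hcomap : (Subgroup.zpowers (g ^ k)).comap (zpowersHom G g)
      = AddSubgroup.toSubgroup (AddSubgroup.zmultiples k) := by
    ext n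
    constructor
    · rintro ⟨m, hm⟩
      have : g ^ (k * m) = g ^ (n : Multiplicative ℤ).toAdd := by
        rw [zpow_mul]; exact hm
      have hkm : k * m = (n : Multiplicative ℤ).toAdd := hinj this
      exact ⟨m, by simpa [smul_eq_mul, mul_comm] using hkm⟩
    · rintro ⟨m, hm⟩
      refine ⟨m, ?_⟩
      show (g ^ k) ^ m = g ^ (n : Multiplicative ℤ).toAdd
      rw [← zpow_mul, ← hm]
      simp [smul_eq_mul, mul_comm]
  have := Subgroup.index_comap (Subgroup.zpowers (g ^ k)) (zpowersHom G g)
  rw [Subgroup.range_zpowersHom] at this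
  rw [← this, hcomap, AddSubgroup.index_toSubgroup, Int.index_zmultiples]

/-- Every virtually cyclic group satisfies Condition A. -/
theorem virtuallyCyclic_conditionA {G : Type*} [Group G]
    (hvc : ∃ H : Subgroup G, IsCyclic H ∧ H.FiniteIndex) : ConditionA G := by
  intro φ g hg k l hk hl hφ
  -- Step 1: `⟨g⟩` has finite index.
  obtain ⟨H, hHc, hHfi⟩ := hvc
  have hN : (Subgroup.zpowers g).index ≠ 0 := by
    obtain ⟨x, hx⟩ := hHc.exists_generator
    obtain ⟨n, hn0, -, hgn⟩ := Subgroup.exists_pow_mem_of_index_ne_zero hHfi.index_ne_zero g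
    obtain ⟨b, hb⟩ := hx ⟨g ^ n, hgn⟩
    have hb' : (x : G) ^ b = g ^ n := by
      have := congrArg (Subtype.val) hb
      simpa using this
    have hgnfin : ¬ IsOfFinOrder (g ^ n) := by
      intro h
      exact hg (h.of_pow (by omega))
    have hxfin : ¬ IsOfFinOrder (x : G) := by
      intro h
      apply hgnfin
      rw [← hb']
      exact h.zpow
    have hbne : b ≠ 0 := by
      rintro rfl
      exact hgnfin (by rw [← hb']; simp)
    have hxH : Subgroup.zpowers (x : G) = H := by
      apply le_antisymm (Subgroup.zpowers_le.2 x.2)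
      intro h hh
      obtain ⟨m, hm⟩ := hx ⟨h, hh⟩
      exact ⟨m, by simpa using congrArg Subtype.val hm⟩
    have hidx : (Subgroup.zpowers ((x : G) ^ b)).index
        = b.natAbs * (Subgroup.zpowers (x : G)).index := index_zpowers_zpow hxfin b
    have hfin2 : (Subgroup.zpowers (g ^ n)).index ≠ 0 := by
      rw [← hb', hidx, hxH]
      exact Nat.mul_ne_zero (Int.natAbs_ne_zero.2 hbne) hHfi.index_ne_zero
    have hle : Subgroup.zpowers (g ^ n) ≤ Subgroup.zpowers g := by
      rw [← zpow_natCast]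
      exact Subgroup.zpowers_le.2 (Subgroup.zpow_mem _ (Subgroup.mem_zpowers g) _)
    intro h0
    exact hfin2 (Nat.eq_zero_of_zero_dvd (h0 ▸ Subgroup.index_dvd_of_le hle))
  -- Step 2: φ maps ⟨g^k⟩ onto ⟨g^l⟩, preserving index.
  have hmap : (Subgroup.zpowers (g ^ k)).map φ.toMonoidHom = Subgroup.zpowers (g ^ l) := by
    rw [MonoidHom.map_zpowers]
    exact congrArg Subgroup.zpowers hφ
  have hidxeq : (Subgroup.zpowers (g ^ l)).index = (Subgroup.zpowers (g ^ k)).index := by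
    rw [← hmap, Subgroup.index_map, φ.toMonoidHom.range_eq_top_of_surjective φ.surjective,
      φ.toMonoidHom.ker_eq_bot_iff.2 φ.injective]
    simp
  rw [index_zpowers_zpow hg k, index_zpowers_zpow hg l] at hidxeq
  have : l.natAbs = k.natAbs := Nat.eq_of_mul_eq_mul_right (Nat.pos_of_ne_zero hN) hidxeq
  rw [Int.abs_eq_natAbs, Int.abs_eq_natAbs, this]
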